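/- Let d ≥ 2 and let (G1,G2,H1,H2) and (G1',G2',H1',H2') be quadruples of complete flags of ℂ^d such that (G1,G2,H_m) and (G1',G2',H_m') are in general position for m = 1,2. Then there exists g ∈ GL_d(ℂ) with g·G1 = G1', g·G2 = G2', g(H1^1) = (H1')^1 and g(H2^1) = (H2')^1 if and only if D^i(G1,G2,H1,H2) = D^i(G1',G2',H1',H2') for every i ∈ A. -/

import Mathlib

noncomputable section

/-- A complete flag of `ℂ^d`: an increasing chain of subspaces `F 0 ⊆ F 1 ⊆ ⋯` of `ℂ^d`
with `dim (F k) = k` for all `k ≤ d`. -/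
def IsCompleteFlag (d : ℕ) (F : ℕ → Submodule ℂ (Fin d → ℂ)) : Prop :=
  Monotone F ∧ ∀ k, k ≤ d → Module.finrank ℂ ↥(F k) = k

/-- Two complete flags of `ℂ^d` are transverse: `F^k + G^(d-k) = ℂ^d` for all `k`. -/
def TransverseFlags (d : ℕ) (F G : ℕ → Submodule ℂ (Fin d → ℂ)) : Prop :=
  ∀ k, k ≤ d → F k ⊔ G (d - k) = ⊤

/-- The flag `g · F`, whose subspaces are the images `g (F k)`. -/
def flagMap (d : ℕ) (g : Matrix (Fin d) (Fin d) ℂ) (F : ℕ → Submodule ℂ (Fin d → ℂ)) :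
    ℕ → Submodule ℂ (Fin d → ℂ) :=
  fun k => Submodule.map g.mulVecLin (F k)

/-- A triple of flags of `ℂ^d` in general position:
`F1^k1 + F2^k2 + F3^k3 = ℂ^d` whenever `k1 + k2 + k3 = d`. -/
def GenPos3 (d : ℕ) (F1 F2 F3 : ℕ → Submodule ℂ (Fin d → ℂ)) : Prop :=
  ∀ k1 k2 k3 : ℕ, k1 + k2 + k3 = d → F1 k1 ⊔ F2 k2 ⊔ F3 k3 = ⊤

/-- The index set `B`: triples of positive integers summing to `d`. -/
def memB (d : ℕ) (j : ℕ × ℕ × ℕ) : Prop :=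
  0 < j.1 ∧ 0 < j.2.1 ∧ 0 < j.2.2 ∧ j.1 + j.2.1 + j.2.2 = d

/-- The index set `A`: pairs of positive integers summing to `d`. -/
def memA (d : ℕ) (i : ℕ × ℕ) : Prop :=
  0 < i.1 ∧ 0 < i.2 ∧ i.1 + i.2 = d

/-- `v 0, v 1, …, v (d-1)` is a basis adapted to the flag `F`: for every `k ≤ d`, the
subspace `F k` is spanned by the first `k` vectors.  A nonzero element `f^k` of the line
`⋀^k F^k` is then given by `v 0 ∧ ⋯ ∧ v (k-1)`. -/
def IsAdaptedBasis (d : ℕ) (F : ℕ → Submodule ℂ (Fin d → ℂ)) (v : ℕ → Fin d → ℂ) : Prop :=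
  ∀ k, k ≤ d → F k = Submodule.span ℂ (v '' {m | m < k})

/-- A choice of adapted basis for a flag. -/
noncomputable def flagBasis (d : ℕ) (F : ℕ → Submodule ℂ (Fin d → ℂ)) : ℕ → Fin d → ℂ :=
  Classical.epsilon (IsAdaptedBasis d F)

/-- The scalar `f1^a ∧ f2^b ∧ f3^(d-a-b)`: the wedge product of the first `a` vectors of
`v1`, the first `b` vectors of `v2` and the first `d - a - b` vectors of `v3`, viewed as a
complex number via the determinant (i.e. via the standard identification `⋀^d ℂ^d ≅ ℂ`). -/
noncomputable def wedgeDet (d a b : ℕ) (v1 v2 v3 : ℕ → Fin d → ℂ) : ℂ :=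
  Matrix.det (Matrix.of fun (i j : Fin d) =>
    if (i : ℕ) < a then v1 (i : ℕ) j
    else if (i : ℕ) < a + b then v2 ((i : ℕ) - a) j
    else v3 ((i : ℕ) - a - b) j)

/-- The triple ratio `T^j(F1,F2,F3)` of a triple of flags in general position,
for `j = (j1,j2,j3)` with `j1 + j2 + j3 = d`. -/
noncomputable def tripleRatio (d : ℕ) (j : ℕ × ℕ × ℕ)
    (F1 F2 F3 : ℕ → Submodule ℂ (Fin d → ℂ)) : ℂ :=
  (wedgeDet d (j.1 + 1) j.2.1 (flagBasis d F1) (flagBasis d F2) (flagBasis d F3) *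
      wedgeDet d j.1 (j.2.1 - 1) (flagBasis d F1) (flagBasis d F2) (flagBasis d F3) *
      wedgeDet d (j.1 - 1) (j.2.1 + 1) (flagBasis d F1) (flagBasis d F2) (flagBasis d F3)) /
    (wedgeDet d (j.1 - 1) j.2.1 (flagBasis d F1) (flagBasis d F2) (flagBasis d F3) *
      wedgeDet d j.1 (j.2.1 + 1) (flagBasis d F1) (flagBasis d F2) (flagBasis d F3) *
      wedgeDet d (j.1 + 1) (j.2.1 - 1) (flagBasis d F1) (flagBasis d F2) (flagBasis d F3))

/-- A choice of nonzero vector in a (1-dimensional) subspace. -/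
noncomputable def lineVec (d : ℕ) (l : Submodule ℂ (Fin d → ℂ)) : Fin d → ℂ :=
  Classical.epsilon fun v => v ∈ l ∧ v ≠ 0

/-- The double ratio `D^i(G1,G2,ℓ1,ℓ2)` of a pair of transverse flags and a pair of lines,
for `i = (i1,i2)` with `i1 + i2 = d`. -/
noncomputable def doubleRatioLine (d : ℕ) (i : ℕ × ℕ) (G1 G2 : ℕ → Submodule ℂ (Fin d → ℂ))
    (l1 l2 : Submodule ℂ (Fin d → ℂ)) : ℂ :=
  -((wedgeDet d i.1 (i.2 - 1) (flagBasis d G1) (flagBasis d G2) (fun _ => lineVec d l1) *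
        wedgeDet d (i.1 - 1) i.2 (flagBasis d G1) (flagBasis d G2) (fun _ => lineVec d l2)) /
      (wedgeDet d i.1 (i.2 - 1) (flagBasis d G1) (flagBasis d G2) (fun _ => lineVec d l2) *
        wedgeDet d (i.1 - 1) i.2 (flagBasis d G1) (flagBasis d G2) (fun _ => lineVec d l1)))

/-- The double ratio `D^i(G1,G2,H1,H2)` of four flags, which only depends on the
`1`-dimensional parts of `H1` and `H2`. -/
noncomputable def doubleRatio (d : ℕ) (i : ℕ × ℕ)
    (G1 G2 H1 H2 : ℕ → Submodule ℂ (Fin d → ℂ)) : ℂ :=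
  doubleRatioLine d i G1 G2 (H1 1) (H2 1)

namespace StatementSix
open Module Submodule Finset

variable {d : ℕ}


lemma flag_finrank {F : ℕ → Submodule ℂ (Fin d → ℂ)} (hF : IsCompleteFlag d F)
    {k : ℕ} (hk : k ≤ d) : Module.finrank ℂ ↥(F k) = k := hF.2 k hk

lemma flag_top {F : ℕ → Submodule ℂ (Fin d → ℂ)} (hF : IsCompleteFlag d F)
    {k : ℕ} (hk : d ≤ k) : F k = ⊤ := by
  have h1 : F d = ⊤ := by
    apply Submodule.eq_top_of_finrank_eq
    rw [flag_finrank hF le_rfl, Module.finrank_fin_fun]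
  exact top_le_iff.mp (h1 ▸ hF.1 hk)

lemma flag_bot {F : ℕ → Submodule ℂ (Fin d → ℂ)} (hF : IsCompleteFlag d F) : F 0 = ⊥ := by
  rw [← Submodule.finrank_eq_zero (S := F 0)]
  exact flag_finrank hF (Nat.zero_le d)

/-- Existence of an adapted basis for a complete flag. -/
lemma exists_adapted {F : ℕ → Submodule ℂ (Fin d → ℂ)} (hF : IsCompleteFlag d F) :
    ∃ v, IsAdaptedBasis d F v := by
  have hlt : ∀ k, k < d → F k < F (k + 1) := by
    intro k hk
    refine lt_of_le_of_ne (hF.1 (Nat.le_succ k)) ?_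
    intro h
    have := flag_finrank hF hk.le
    rw [h, flag_finrank hF hk] at this
    omega
  choose! x hx1 hx2 using fun k (hk : k < d) => SetLike.exists_of_lt (hlt k hk)
  refine ⟨fun k => if hk : k < d then x k else 0, ?_⟩
  intro k hk
  induction k with
  | zero => simp [flag_bot hF]
  | succ n ih =>
    have hn : n < d := hk
    have hspan : F n = Submodule.span ℂ ((fun k => if hk : k < d then x k else 0) '' {m | m < n}) :=
      ih (Nat.le_of_succ_le hk)
    have himg : (fun k => if hk : k < d then x k else 0) '' {m | m < n + 1} =
        insert (x n) ((fun k => if hk : k < d then x k else 0) '' {m | m < n}) := by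
      rw [show {m | m < n + 1} = insert n {m | m < n} by ext m; simp [Nat.lt_succ_iff_lt_or_eq, or_comm]; omega]
      rw [Set.image_insert_eq]
      simp [hn]
    rw [himg, Submodule.span_insert, ← hspan]
    have hle : Submodule.span ℂ {x n} ⊔ F n ≤ F (n + 1) := by
      refine sup_le ?_ (hF.1 (Nat.le_succ n))
      rw [Submodule.span_le, Set.singleton_subset_iff]
      exact hx1 n hn
    have hlt2 : F n < Submodule.span ℂ {x n} ⊔ F n := by
      refine lt_of_le_of_ne le_sup_right ?_
      intro h
      exact hx2 n hn (h ▸ (le_sup_left : Submodule.span ℂ {x n} ≤ _)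
        (Submodule.mem_span_singleton_self (x n)))
    refine (Submodule.eq_of_le_of_finrank_le hle ?_).symm
    have h1 := Submodule.finrank_lt_finrank_of_lt hlt2
    rw [flag_finrank hF (Nat.le_of_succ_le hk)] at h1
    rw [flag_finrank hF hk]
    omega

lemma flagBasis_adapted {F : ℕ → Submodule ℂ (Fin d → ℂ)} (hF : IsCompleteFlag d F) :
    IsAdaptedBasis d F (flagBasis d F) :=
  Classical.epsilon_spec (exists_adapted hF)

lemma lineVec_spec {l : Submodule ℂ (Fin d → ℂ)} (hl : Module.finrank ℂ ↥l = 1) :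
    lineVec d l ∈ l ∧ lineVec d l ≠ 0 := by
  apply Classical.epsilon_spec (p := fun v => v ∈ l ∧ v ≠ 0)
  apply Submodule.exists_mem_ne_zero_of_ne_bot
  intro hbot
  rw [hbot] at hl
  simp at hl

lemma line_eq_span {l : Submodule ℂ (Fin d → ℂ)} (hl : Module.finrank ℂ ↥l = 1)
    {h : Fin d → ℂ} (hmem : h ∈ l) (h0 : h ≠ 0) : l = Submodule.span ℂ {h} := by
  symm
  apply Submodule.eq_of_le_of_finrank_le
  · rwa [Submodule.span_le, Set.singleton_subset_iff]
  · rw [hl, finrank_span_singleton h0]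


lemma adapted_image {v : ℕ → Fin d → ℂ} {k : ℕ} (hk : k ≤ d) :
    v '' {m | m < k} = (fun j : Fin d => v (j : ℕ)) '' {j : Fin d | (j : ℕ) < k} := by
  ext y
  constructor
  · rintro ⟨m, hm, rfl⟩
    exact ⟨⟨m, lt_of_lt_of_le hm hk⟩, hm, rfl⟩
  · rintro ⟨j, hj, rfl⟩
    exact ⟨(j : ℕ), hj, rfl⟩

lemma adapted_span_top {F : ℕ → Submodule ℂ (Fin d → ℂ)} {v : ℕ → Fin d → ℂ}
    (hF : IsCompleteFlag d F) (hv : IsAdaptedBasis d F v) :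
    ⊤ ≤ Submodule.span ℂ (Set.range fun j : Fin d => v (j : ℕ)) := by
  have h1 : Set.range (fun j : Fin d => v (j : ℕ)) = v '' {m | m < d} := by
    ext y
    constructor
    · rintro ⟨j, rfl⟩; exact ⟨(j : ℕ), j.isLt, rfl⟩
    · rintro ⟨m, hm, rfl⟩; exact ⟨⟨m, hm⟩, rfl⟩
  rw [h1, ← hv d le_rfl, flag_top hF le_rfl]

/-- A basis attached to an adapted basis of a complete flag. -/
lemma exists_basis_of_adapted {F : ℕ → Submodule ℂ (Fin d → ℂ)} {v : ℕ → Fin d → ℂ}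
    (hF : IsCompleteFlag d F) (hv : IsAdaptedBasis d F v) :
    ∃ B : Basis (Fin d) ℂ (Fin d → ℂ), ∀ j : Fin d, B j = v (j : ℕ) := by
  refine ⟨basisOfTopLeSpanOfCardEqFinrank _ (adapted_span_top hF hv)
    (by simp [Module.finrank_fin_fun]), fun j => ?_⟩
  rw [coe_basisOfTopLeSpanOfCardEqFinrank]

lemma repr_support {F : ℕ → Submodule ℂ (Fin d → ℂ)} {v u : ℕ → Fin d → ℂ}
    (hF : IsCompleteFlag d F) (hv : IsAdaptedBasis d F v) (hu : IsAdaptedBasis d F u)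
    {B : Basis (Fin d) ℂ (Fin d → ℂ)} (hB : ∀ j : Fin d, B j = v (j : ℕ))
    {m : ℕ} (hm : m < d) {j : Fin d} (hj : m < (j : ℕ)) : B.repr (u m) j = 0 := by
  have hmem : u m ∈ Submodule.span ℂ (⇑B '' {j : Fin d | (j : ℕ) < m + 1}) := by
    have h1 : u m ∈ F (m + 1) := by
      rw [hu (m + 1) hm]
      exact Submodule.subset_span ⟨m, Nat.lt_succ_self m, rfl⟩
    rw [hv (m + 1) hm, adapted_image (by omega : m + 1 ≤ d)] at h1
    have h2 : (fun j : Fin d => v (j : ℕ)) '' {j : Fin d | (j : ℕ) < m + 1} =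
        ⇑B '' {j : Fin d | (j : ℕ) < m + 1} := by
      apply Set.image_congr
      intro j _
      exact (hB j).symm
    rwa [h2] at h1
  have hsupp := (B.mem_span_image).mp hmem
  by_contra h0
  have : j ∈ (B.repr (u m)).support := Finsupp.mem_support_iff.mpr h0
  have := hsupp this
  simp only [Set.mem_setOf_eq] at this
  omega

lemma repr_diag_ne_zero {F : ℕ → Submodule ℂ (Fin d → ℂ)} {v u : ℕ → Fin d → ℂ}
    (hF : IsCompleteFlag d F) (hv : IsAdaptedBasis d F v) (hu : IsAdaptedBasis d F u)
    {B : Basis (Fin d) ℂ (Fin d → ℂ)} (hB : ∀ j : Fin d, B j = v (j : ℕ))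
    {m : ℕ} (hm : m < d) : B.repr (u m) ⟨m, hm⟩ ≠ 0 := by
  intro h0
  have hmem : u m ∈ Submodule.span ℂ (⇑B '' {j : Fin d | (j : ℕ) < m}) := by
    rw [B.mem_span_image]
    intro j hj
    rw [Finset.mem_coe, Finsupp.mem_support_iff] at hj
    simp only [Set.mem_setOf_eq]
    by_contra hge
    push_neg at hge
    rcases lt_or_eq_of_le hge with h | h
    · exact hj (repr_support hF hv hu hB hm h)
    · apply hj
      have : j = ⟨m, hm⟩ := Fin.ext h.symm
      rw [this]
      exact h0
  have humFm : u m ∈ F m := by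
    have h2 : ⇑B '' {j : Fin d | (j : ℕ) < m} = (fun j : Fin d => v (j : ℕ)) '' {j : Fin d | (j : ℕ) < m} :=
      Set.image_congr fun j _ => hB j
    rw [h2, ← adapted_image (le_of_lt hm), ← hv m (le_of_lt hm)] at hmem
    exact hmem
  have hle : F (m + 1) ≤ F m := by
    rw [hu (m + 1) hm, Submodule.span_le]
    rintro y ⟨t, ht, rfl⟩
    simp only [Set.mem_setOf_eq] at ht
    rcases Nat.lt_succ_iff_lt_or_eq.mp ht with h | rfl
    · have : u t ∈ F (t + 1) := by
        rw [hu (t + 1) (by omega)]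
        exact Submodule.subset_span ⟨t, Nat.lt_succ_self t, rfl⟩
      exact hF.1 (by omega : t + 1 ≤ m) this
    · exact humFm
  have := Submodule.finrank_mono hle
  rw [flag_finrank hF hm, flag_finrank hF (le_of_lt hm)] at this
  omega

open Fin.NatCast in
lemma wedge_change {G1 G2 : ℕ → Submodule ℂ (Fin d → ℂ)} {v1 v2 u1 u2 : ℕ → Fin d → ℂ}
    (hG1 : IsCompleteFlag d G1) (hG2 : IsCompleteFlag d G2)
    (hv1 : IsAdaptedBasis d G1 v1) (hv2 : IsAdaptedBasis d G2 v2)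
    (hu1 : IsAdaptedBasis d G1 u1) (hu2 : IsAdaptedBasis d G2 u2) :
    ∃ c1 c2 : ℕ → ℂ, (∀ m, m < d → c1 m ≠ 0) ∧ (∀ m, m < d → c2 m ≠ 0) ∧
      ∀ a b : ℕ, a + b + 1 = d → ∀ h : Fin d → ℂ,
        wedgeDet d a b u1 u2 (fun _ => h) =
          ((∏ m ∈ Finset.range a, c1 m) * ∏ m ∈ Finset.range b, c2 m) *
            wedgeDet d a b v1 v2 (fun _ => h) := by
  classical
  obtain ⟨B1, hB1⟩ := exists_basis_of_adapted hG1 hv1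
  obtain ⟨B2, hB2⟩ := exists_basis_of_adapted hG2 hv2
  refine ⟨fun m => if hm : m < d then B1.repr (u1 m) ⟨m, hm⟩ else 1,
          fun m => if hm : m < d then B2.repr (u2 m) ⟨m, hm⟩ else 1, ?_, ?_, ?_⟩
  · intro m hm
    simpa [hm] using repr_diag_ne_zero hG1 hv1 hu1 hB1 hm
  · intro m hm
    simpa [hm] using repr_diag_ne_zero hG2 hv2 hu2 hB2 hm
  intro a b hab h
  haveI : NeZero d := ⟨by omega⟩
  set M_v : Matrix (Fin d) (Fin d) ℂ := Matrix.of fun (i j : Fin d) =>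
    if (i : ℕ) < a then v1 (i : ℕ) j
    else if (i : ℕ) < a + b then v2 ((i : ℕ) - a) j
    else (fun _ => h) ((i : ℕ) - a - b) j with hMv
  set T : Matrix (Fin d) (Fin d) ℂ := Matrix.of fun (i k : Fin d) =>
    if (i : ℕ) < a then B1.repr (u1 (i : ℕ)) k
    else if (i : ℕ) < a + b then
      (if a ≤ (k : ℕ) ∧ (k : ℕ) < a + b then
        B2.repr (u2 ((i : ℕ) - a)) ⟨(k : ℕ) - a, Nat.lt_of_le_of_lt (Nat.sub_le _ _) k.isLt⟩
      else 0)
    else if k = i then 1 else 0 with hT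
  have hca : ((a : Fin d) : ℕ) = a := by
    rw [Fin.val_natCast]
    exact Nat.mod_eq_of_lt (by omega)
  have hM : (Matrix.of fun (i j : Fin d) =>
      if (i : ℕ) < a then u1 (i : ℕ) j
      else if (i : ℕ) < a + b then u2 ((i : ℕ) - a) j
      else (fun _ => h) ((i : ℕ) - a - b) j) = T * M_v := by
    ext i j
    rw [Matrix.mul_apply]
    by_cases hia : (i : ℕ) < a
    · have hsum : ∀ k : Fin d, T i k * M_v k j = B1.repr (u1 (i : ℕ)) k * v1 (k : ℕ) j := by
        intro k
        by_cases hka : (k : ℕ) < a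
        · simp only [hT, hMv, Matrix.of_apply, if_pos hia, if_pos hka]
        · have h0 : B1.repr (u1 (i : ℕ)) k = 0 :=
            repr_support hG1 hv1 hu1 hB1 (by omega) (by omega)
          simp only [hT, Matrix.of_apply, if_pos hia, h0, zero_mul]
      rw [Finset.sum_congr rfl fun k _ => hsum k]
      simp only [Matrix.of_apply, if_pos hia]
      calc u1 (i : ℕ) j = (∑ k : Fin d, B1.repr (u1 (i : ℕ)) k • B1 k) j := by
            rw [B1.sum_repr]
        _ = ∑ k : Fin d, B1.repr (u1 (i : ℕ)) k * v1 (k : ℕ) j := by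
            rw [Finset.sum_apply]
            exact Finset.sum_congr rfl fun k _ => by
              rw [hB1 k, Pi.smul_apply, smul_eq_mul]
    · by_cases hib : (i : ℕ) < a + b
      · have key : ∀ t : Fin d, T i (t + (a : Fin d)) * M_v (t + (a : Fin d)) j
            = B2.repr (u2 ((i : ℕ) - a)) t * v2 (t : ℕ) j := by
          intro t
          set s : Fin d := t + (a : Fin d) with hsdef
          have hs : (s : ℕ) = ((t : ℕ) + a) % d := by
            rw [hsdef, Fin.val_add, hca]
          by_cases htb : (t : ℕ) < b
          · have hs2 : (s : ℕ) = (t : ℕ) + a := by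
              rw [hs]; exact Nat.mod_eq_of_lt (by omega)
            simp only [hT, hMv, Matrix.of_apply]
            rw [if_neg (by omega : ¬ (i : ℕ) < a), if_pos hib,
              if_pos (show a ≤ (s : ℕ) ∧ (s : ℕ) < a + b by omega),
              if_neg (show ¬ (s : ℕ) < a by omega),
              if_pos (show (s : ℕ) < a + b by omega)]
            simp only [hs2, Nat.add_sub_cancel, Fin.eta]
          · have hmlt : (i : ℕ) - a < d := by omega
            have h0 : B2.repr (u2 ((i : ℕ) - a)) t = 0 :=
              repr_support hG2 hv2 hu2 hB2 hmlt (by omega)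
            have hnc : ¬(a ≤ (s : ℕ) ∧ (s : ℕ) < a + b) := by
              rcases Nat.lt_or_ge ((t : ℕ) + a) d with hlt | hge
              · rw [Nat.mod_eq_of_lt hlt] at hs; omega
              · have hmod : ((t : ℕ) + a) % d = (t : ℕ) + a - d := by
                  rw [Nat.mod_eq_sub_mod hge, Nat.mod_eq_of_lt (by omega)]
                rw [hmod] at hs; omega
            simp only [hT, Matrix.of_apply]
            rw [if_neg (by omega : ¬ (i : ℕ) < a), if_pos hib, if_neg hnc, zero_mul, h0, zero_mul]
        simp only [Matrix.of_apply, if_neg hia, if_pos hib]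
        refine Eq.symm ?_
        calc ∑ k : Fin d, T i k * M_v k j
            = ∑ t : Fin d, T i (t + (a : Fin d)) * M_v (t + (a : Fin d)) j := by
              refine (Fintype.sum_equiv (Equiv.addRight ((a : ℕ) : Fin d))
                (fun t => T i (t + (a : Fin d)) * M_v (t + (a : Fin d)) j)
                (fun k => T i k * M_v k j) (fun t => rfl)).symm
          _ = ∑ t : Fin d, B2.repr (u2 ((i : ℕ) - a)) t * v2 (t : ℕ) j :=
              Finset.sum_congr rfl fun t _ => key t
          _ = u2 ((i : ℕ) - a) j := by
              rw [show u2 ((i : ℕ) - a) j = (∑ k : Fin d, B2.repr (u2 ((i : ℕ) - a)) k • B2 k) j by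
                rw [B2.sum_repr], Finset.sum_apply]
              exact Finset.sum_congr rfl fun k _ => by
                rw [hB2 k, Pi.smul_apply, smul_eq_mul]
      · have hsum : ∀ k : Fin d, T i k * M_v k j = if k = i then M_v i j else 0 := by
          intro k
          simp only [hT, Matrix.of_apply, if_neg hia, if_neg hib]
          by_cases hk : k = i
          · rw [if_pos hk, if_pos hk, one_mul, hk]
          · rw [if_neg hk, if_neg hk, zero_mul]
        rw [Finset.sum_congr rfl fun k _ => hsum k, Finset.sum_ite_eq' Finset.univ i]
        simp only [Finset.mem_univ, if_pos, Matrix.of_apply, if_neg hia, if_neg hib, hMv]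
  have hTri : T.BlockTriangular OrderDual.toDual := by
    intro p q hpq
    have hpq' : (p : ℕ) < (q : ℕ) := hpq
    simp only [hT, Matrix.of_apply]
    by_cases hpa : (p : ℕ) < a
    · rw [if_pos hpa]
      exact repr_support hG1 hv1 hu1 hB1 (by omega) (by omega)
    · rw [if_neg hpa]
      by_cases hpb : (p : ℕ) < a + b
      · rw [if_pos hpb]
        by_cases hq : a ≤ (q : ℕ) ∧ (q : ℕ) < a + b
        · rw [if_pos hq]
          refine repr_support hG2 hv2 hu2 hB2 (by omega) ?_
          show (p : ℕ) - a < (q : ℕ) - a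
          omega
        · rw [if_neg hq]
      · rw [if_neg hpb]
        rw [if_neg (show ¬ q = p from fun hqp => by rw [hqp] at hpq'; omega)]
  have hdetT : T.det = (∏ m ∈ Finset.range a,
        (fun m => if hm : m < d then B1.repr (u1 m) ⟨m, hm⟩ else 1) m) *
      ∏ m ∈ Finset.range b,
        (fun m => if hm : m < d then B2.repr (u2 m) ⟨m, hm⟩ else 1) m := by
    rw [Matrix.det_of_lowerTriangular T hTri]
    have hdiag : ∀ p : Fin d, T p p =
        (fun m : ℕ => if m < a then (if hm : m < d then B1.repr (u1 m) ⟨m, hm⟩ else 1)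
          else if m < a + b then (if hm : m - a < d then B2.repr (u2 (m - a)) ⟨m - a, hm⟩ else 1)
          else 1) (p : ℕ) := by
      intro p
      simp only [hT, Matrix.of_apply]
      by_cases hpa : (p : ℕ) < a
      · rw [if_pos hpa, if_pos hpa, dif_pos p.isLt, Fin.eta]
      · rw [if_neg hpa, if_neg hpa]
        by_cases hpb : (p : ℕ) < a + b
        · rw [if_pos hpb, if_pos hpb, if_pos (show a ≤ (p : ℕ) ∧ (p : ℕ) < a + b by omega),
            dif_pos (show (p : ℕ) - a < d by omega)]
        · rw [if_neg hpb, if_neg hpb]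
          simp
    rw [Finset.prod_congr rfl fun p _ => hdiag p,
      Fin.prod_univ_eq_prod_range (fun m : ℕ =>
        if m < a then (if hm : m < d then B1.repr (u1 m) ⟨m, hm⟩ else 1)
        else if m < a + b then (if hm : m - a < d then B2.repr (u2 (m - a)) ⟨m - a, hm⟩ else 1)
        else 1) d,
      show Finset.range d = Finset.range (a + b + 1) by rw [hab],
      Finset.prod_range_succ, if_neg (by omega : ¬ (a + b < a)),
      if_neg (by omega : ¬ (a + b < a + b)), mul_one, Finset.prod_range_add]
    congr 1
    · exact Finset.prod_congr rfl fun m hm => by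
        rw [if_pos (Finset.mem_range.mp hm)]
    · refine Finset.prod_congr rfl fun m hm => ?_
      have hmb : m < b := Finset.mem_range.mp hm
      rw [if_neg (by omega), if_pos (by omega), Nat.add_sub_cancel_left]
  show (Matrix.of fun (i j : Fin d) =>
      if (i : ℕ) < a then u1 (i : ℕ) j
      else if (i : ℕ) < a + b then u2 ((i : ℕ) - a) j
      else (fun _ => h) ((i : ℕ) - a - b) j).det = _
  rw [hM, Matrix.det_mul, hdetT]
  rfl
lemma wedgeDet_smul_last {v1 v2 : ℕ → Fin d → ℂ} {a b : ℕ} (hab : a + b + 1 = d)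
    (μ : ℂ) (h : Fin d → ℂ) :
    wedgeDet d a b v1 v2 (fun _ => μ • h) = μ * wedgeDet d a b v1 v2 (fun _ => h) := by
  have hd : 0 < d := by omega
  set L : Fin d := ⟨d - 1, by omega⟩ with hL
  set M : Matrix (Fin d) (Fin d) ℂ := Matrix.of fun (i j : Fin d) =>
    if (i : ℕ) < a then v1 (i : ℕ) j
    else if (i : ℕ) < a + b then v2 ((i : ℕ) - a) j
    else (fun _ => h) ((i : ℕ) - a - b) j with hM
  have h1 : (Matrix.of fun (i j : Fin d) =>
      if (i : ℕ) < a then v1 (i : ℕ) j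
      else if (i : ℕ) < a + b then v2 ((i : ℕ) - a) j
      else (fun _ => μ • h) ((i : ℕ) - a - b) j) = M.updateRow L (μ • h) := by
    ext i j
    rw [Matrix.updateRow_apply]
    by_cases hi : i = L
    · rw [if_pos hi, hi]
      simp only [Matrix.of_apply, hL]
      rw [if_neg (by simp; omega), if_neg (by simp; omega)]
    · have hiv : (i : ℕ) < a + b := by
        have : (i : ℕ) ≠ d - 1 := fun hc => hi (Fin.ext (by simp [hL, hc]))
        have := i.isLt
        omega
      rw [if_neg hi]
      simp only [hM, Matrix.of_apply]
      by_cases hia : (i : ℕ) < a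
      · rw [if_pos hia, if_pos hia]
      · rw [if_neg hia, if_neg hia, if_pos hiv, if_pos hiv]
  have h2 : M.updateRow L h = M := by
    ext i j
    rw [Matrix.updateRow_apply]
    by_cases hi : i = L
    · rw [if_pos hi, hi]
      simp only [hM, Matrix.of_apply, hL]
      rw [if_neg (by simp; omega), if_neg (by simp; omega)]
    · rw [if_neg hi]
  show (Matrix.of fun (i j : Fin d) =>
      if (i : ℕ) < a then v1 (i : ℕ) j
      else if (i : ℕ) < a + b then v2 ((i : ℕ) - a) j
      else (fun _ => μ • h) ((i : ℕ) - a - b) j).det = μ * M.det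
  rw [h1, Matrix.det_updateRow_smul, h2]

lemma genpos_transverse {G1 G2 H : ℕ → Submodule ℂ (Fin d → ℂ)}
    (hH : IsCompleteFlag d H) (hgen : GenPos3 d G1 G2 H) :
    ∀ k, k ≤ d → G1 k ⊔ G2 (d - k) = ⊤ := by
  intro k hk
  have := hgen k (d - k) 0 (by omega)
  rwa [flag_bot hH, sup_bot_eq] at this

/-- Well-definedness: the double ratio can be computed with any adapted bases and any
nonzero vectors in the lines. -/
lemma doubleRatio_eq {G1 G2 H1 H2 : ℕ → Submodule ℂ (Fin d → ℂ)} {v1 v2 : ℕ → Fin d → ℂ}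
    {h1 h2 : Fin d → ℂ}
    (hG1 : IsCompleteFlag d G1) (hG2 : IsCompleteFlag d G2)
    (hH1 : IsCompleteFlag d H1) (hH2 : IsCompleteFlag d H2)
    (hv1 : IsAdaptedBasis d G1 v1) (hv2 : IsAdaptedBasis d G2 v2)
    (hh1 : h1 ∈ H1 1) (hh01 : h1 ≠ 0) (hh2 : h2 ∈ H2 1) (hh02 : h2 ≠ 0)
    {i : ℕ × ℕ} (hi : memA d i) :
    doubleRatio d i G1 G2 H1 H2 =
      -((wedgeDet d i.1 (i.2 - 1) v1 v2 (fun _ => h1) *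
          wedgeDet d (i.1 - 1) i.2 v1 v2 (fun _ => h2)) /
        (wedgeDet d i.1 (i.2 - 1) v1 v2 (fun _ => h2) *
          wedgeDet d (i.1 - 1) i.2 v1 v2 (fun _ => h1))) := by
  obtain ⟨hi1, hi2, hisum⟩ := hi
  have hd : 2 ≤ d := by omega
  have hr1 : Module.finrank ℂ ↥(H1 1) = 1 := flag_finrank hH1 (by omega)
  have hr2 : Module.finrank ℂ ↥(H2 1) = 1 := flag_finrank hH2 (by omega)
  obtain ⟨hl1mem, hl1ne⟩ := lineVec_spec hr1
  obtain ⟨hl2mem, hl2ne⟩ := lineVec_spec hr2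
  obtain ⟨μ1, hμ1⟩ : ∃ μ1 : ℂ, lineVec d (H1 1) = μ1 • h1 := by
    have hsp := line_eq_span hr1 hh1 hh01
    have hm2 : lineVec d (H1 1) ∈ Submodule.span ℂ {h1} := by
      rw [← hsp]; exact hl1mem
    obtain ⟨c, hc⟩ := Submodule.mem_span_singleton.mp hm2
    exact ⟨c, hc.symm⟩
  obtain ⟨μ2, hμ2⟩ : ∃ μ2 : ℂ, lineVec d (H2 1) = μ2 • h2 := by
    have hsp := line_eq_span hr2 hh2 hh02
    have hm2 : lineVec d (H2 1) ∈ Submodule.span ℂ {h2} := by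
      rw [← hsp]; exact hl2mem
    obtain ⟨c, hc⟩ := Submodule.mem_span_singleton.mp hm2
    exact ⟨c, hc.symm⟩
  have hμ1ne : μ1 ≠ 0 := by
    intro hc; rw [hc, zero_smul] at hμ1; exact hl1ne hμ1
  have hμ2ne : μ2 ≠ 0 := by
    intro hc; rw [hc, zero_smul] at hμ2; exact hl2ne hμ2
  obtain ⟨c1, c2, hc1, hc2, key⟩ :=
    wedge_change hG1 hG2 hv1 hv2 (flagBasis_adapted hG1) (flagBasis_adapted hG2)
  have hab1 : i.1 + (i.2 - 1) + 1 = d := by omega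
  have hab2 : (i.1 - 1) + i.2 + 1 = d := by omega
  set P : ℂ := ∏ m ∈ Finset.range i.1, c1 m with hP
  set P' : ℂ := ∏ m ∈ Finset.range (i.1 - 1), c1 m with hP'
  set Q : ℂ := ∏ m ∈ Finset.range (i.2 - 1), c2 m with hQ
  set Q' : ℂ := ∏ m ∈ Finset.range i.2, c2 m with hQ'
  have hPne : P ≠ 0 := Finset.prod_ne_zero_iff.mpr fun m hm =>
    hc1 m (by have := Finset.mem_range.mp hm; omega)
  have hP'ne : P' ≠ 0 := Finset.prod_ne_zero_iff.mpr fun m hm =>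
    hc1 m (by have := Finset.mem_range.mp hm; omega)
  have hQne : Q ≠ 0 := Finset.prod_ne_zero_iff.mpr fun m hm =>
    hc2 m (by have := Finset.mem_range.mp hm; omega)
  have hQ'ne : Q' ≠ 0 := Finset.prod_ne_zero_iff.mpr fun m hm =>
    hc2 m (by have := Finset.mem_range.mp hm; omega)
  set A := wedgeDet d i.1 (i.2 - 1) v1 v2 (fun _ => h1) with hA
  set B := wedgeDet d (i.1 - 1) i.2 v1 v2 (fun _ => h2) with hB
  set C := wedgeDet d i.1 (i.2 - 1) v1 v2 (fun _ => h2) with hC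
  set D := wedgeDet d (i.1 - 1) i.2 v1 v2 (fun _ => h1) with hD
  have e1 : wedgeDet d i.1 (i.2 - 1) (flagBasis d G1) (flagBasis d G2)
      (fun _ => lineVec d (H1 1)) = P * Q * (μ1 * A) := by
    rw [show (fun _ : ℕ => lineVec d (H1 1)) = (fun _ : ℕ => μ1 • h1) by
      funext _; exact hμ1]
    rw [key i.1 (i.2 - 1) hab1 (μ1 • h1), wedgeDet_smul_last hab1]
  have e2 : wedgeDet d (i.1 - 1) i.2 (flagBasis d G1) (flagBasis d G2)
      (fun _ => lineVec d (H2 1)) = P' * Q' * (μ2 * B) := by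
    rw [show (fun _ : ℕ => lineVec d (H2 1)) = (fun _ : ℕ => μ2 • h2) by
      funext _; exact hμ2]
    rw [key (i.1 - 1) i.2 hab2 (μ2 • h2), wedgeDet_smul_last hab2]
  have e3 : wedgeDet d i.1 (i.2 - 1) (flagBasis d G1) (flagBasis d G2)
      (fun _ => lineVec d (H2 1)) = P * Q * (μ2 * C) := by
    rw [show (fun _ : ℕ => lineVec d (H2 1)) = (fun _ : ℕ => μ2 • h2) by
      funext _; exact hμ2]
    rw [key i.1 (i.2 - 1) hab1 (μ2 • h2), wedgeDet_smul_last hab1]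
  have e4 : wedgeDet d (i.1 - 1) i.2 (flagBasis d G1) (flagBasis d G2)
      (fun _ => lineVec d (H1 1)) = P' * Q' * (μ1 * D) := by
    rw [show (fun _ : ℕ => lineVec d (H1 1)) = (fun _ : ℕ => μ1 • h1) by
      funext _; exact hμ1]
    rw [key (i.1 - 1) i.2 hab2 (μ1 • h1), wedgeDet_smul_last hab2]
  show -((wedgeDet d i.1 (i.2 - 1) (flagBasis d G1) (flagBasis d G2)
      (fun _ => lineVec d (H1 1)) * wedgeDet d (i.1 - 1) i.2 (flagBasis d G1) (flagBasis d G2)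
      (fun _ => lineVec d (H2 1))) / (wedgeDet d i.1 (i.2 - 1) (flagBasis d G1) (flagBasis d G2)
      (fun _ => lineVec d (H2 1)) * wedgeDet d (i.1 - 1) i.2 (flagBasis d G1) (flagBasis d G2)
      (fun _ => lineVec d (H1 1)))) = _
  rw [e1, e2, e3, e4]
  have hK : P * Q * P' * Q' * μ1 * μ2 ≠ 0 := by
    simp only [mul_ne_zero_iff]
    exact ⟨⟨⟨⟨⟨hPne, hQne⟩, hP'ne⟩, hQ'ne⟩, hμ1ne⟩, hμ2ne⟩
  rw [show P * Q * (μ1 * A) * (P' * Q' * (μ2 * B)) = (P * Q * P' * Q' * μ1 * μ2) * (A * B) by ring,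
    show P * Q * (μ2 * C) * (P' * Q' * (μ1 * D)) = (P * Q * P' * Q' * μ1 * μ2) * (C * D) by ring,
    mul_div_mul_left _ _ hK]
lemma adapted_of_step {F : ℕ → Submodule ℂ (Fin d → ℂ)} (hF : IsCompleteFlag d F)
    {w : ℕ → Fin d → ℂ} (hw : ∀ k, k < d → w k ∈ F (k + 1) ∧ w k ∉ F k) :
    IsAdaptedBasis d F w := by
  intro k hk
  induction k with
  | zero => simp [flag_bot hF]
  | succ n ih =>
    have hn : n < d := hk
    have hspan : F n = Submodule.span ℂ (w '' {m | m < n}) := ih (Nat.le_of_succ_le hk)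
    have himg : w '' {m | m < n + 1} = insert (w n) (w '' {m | m < n}) := by
      rw [show {m | m < n + 1} = insert n {m | m < n} by
        ext m; simp [Nat.lt_succ_iff_lt_or_eq, or_comm]; omega]
      rw [Set.image_insert_eq]
    rw [himg, Submodule.span_insert, ← hspan]
    have hle : Submodule.span ℂ {w n} ⊔ F n ≤ F (n + 1) := by
      refine sup_le ?_ (hF.1 (Nat.le_succ n))
      rw [Submodule.span_le, Set.singleton_subset_iff]
      exact (hw n hn).1
    have hlt2 : F n < Submodule.span ℂ {w n} ⊔ F n := by
      refine lt_of_le_of_ne le_sup_right ?_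
      intro h
      exact (hw n hn).2 (h ▸ (le_sup_left : Submodule.span ℂ {w n} ≤ _)
        (Submodule.mem_span_singleton_self (w n)))
    refine (Submodule.eq_of_le_of_finrank_le hle ?_).symm
    have h1 := Submodule.finrank_lt_finrank_of_lt hlt2
    rw [flag_finrank hF (Nat.le_of_succ_le hk)] at h1
    rw [flag_finrank hF hk]
    omega

lemma inf_eq_bot_of_transverse {G1 G2 : ℕ → Submodule ℂ (Fin d → ℂ)}
    (hG1 : IsCompleteFlag d G1) (hG2 : IsCompleteFlag d G2)
    (htr : ∀ k, k ≤ d → G1 k ⊔ G2 (d - k) = ⊤) {k : ℕ} (hk : k ≤ d) :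
    G1 k ⊓ G2 (d - k) = ⊥ := by
  have hsum := Submodule.finrank_sup_add_finrank_inf_eq (G1 k) (G2 (d - k))
  rw [htr k hk, flag_finrank hG1 hk, flag_finrank hG2 (by omega)] at hsum
  have htop : Module.finrank ℂ ↥(⊤ : Submodule ℂ (Fin d → ℂ)) = d := by
    rw [finrank_top, Module.finrank_fin_fun]
  rw [htop] at hsum
  rw [← Submodule.finrank_eq_zero (S := G1 k ⊓ G2 (d - k))]
  omega

lemma exists_adapted_pair {G1 G2 : ℕ → Submodule ℂ (Fin d → ℂ)}
    (hG1 : IsCompleteFlag d G1) (hG2 : IsCompleteFlag d G2)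
    (htr : ∀ k, k ≤ d → G1 k ⊔ G2 (d - k) = ⊤) :
    ∃ f : ℕ → Fin d → ℂ, IsAdaptedBasis d G1 f ∧
      IsAdaptedBasis d G2 (fun k => f (d - 1 - k)) ∧
      ∀ k, k < d → f k ∈ G1 (k + 1) ⊓ G2 (d - k) := by
  have hne : ∀ k, k < d → ∃ x, x ∈ G1 (k + 1) ⊓ G2 (d - k) ∧ x ≠ 0 := by
    intro k hk
    apply Submodule.exists_mem_ne_zero_of_ne_bot
    intro hbot
    have hsum := Submodule.finrank_sup_add_finrank_inf_eq (G1 (k + 1)) (G2 (d - k))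
    have hsup : G1 (k + 1) ⊔ G2 (d - k) = ⊤ := by
      rw [eq_top_iff, ← htr k (by omega)]
      exact sup_le_sup_right (hG1.1 (Nat.le_succ k)) _
    rw [hsup, hbot, flag_finrank hG1 (by omega), flag_finrank hG2 (by omega),
      finrank_bot, finrank_top, Module.finrank_fin_fun] at hsum
    omega
  choose! f hf1 hf0 using hne
  have hfG1 : ∀ k, k < d → f k ∈ G1 (k + 1) := fun k hk => ((hf1 k hk).1 : _)
  have hfG2 : ∀ k, k < d → f k ∈ G2 (d - k) := fun k hk => ((hf1 k hk).2 : _)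
  have hnotG1 : ∀ k, k < d → f k ∉ G1 k := by
    intro k hk hmem
    have hbot := inf_eq_bot_of_transverse hG1 hG2 htr (by omega : k ≤ d)
    have : f k ∈ G1 k ⊓ G2 (d - k) := ⟨hmem, hfG2 k hk⟩
    rw [hbot] at this
    exact hf0 k hk this
  have hnotG2 : ∀ k, k < d → f k ∉ G2 (d - k - 1) := by
    intro k hk hmem
    have hbot := inf_eq_bot_of_transverse hG1 hG2 htr (by omega : k + 1 ≤ d)
    have : f k ∈ G1 (k + 1) ⊓ G2 (d - (k + 1)) := ⟨hfG1 k hk, by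
      rw [show d - (k + 1) = d - k - 1 by omega]; exact hmem⟩
    rw [hbot] at this
    exact hf0 k hk this
  refine ⟨f, ?_, ?_, fun k hk => hf1 k hk⟩
  · exact adapted_of_step hG1 fun k hk => ⟨hfG1 k hk, hnotG1 k hk⟩
  · refine adapted_of_step hG2 fun k hk => ⟨?_, ?_⟩
    · have h := hfG2 (d - 1 - k) (by omega)
      rwa [show d - (d - 1 - k) = k + 1 by omega] at h
    · have h := hnotG2 (d - 1 - k) (by omega)
      rwa [show d - (d - 1 - k) - 1 = k by omega] at h

/-- The row permutation occurring in `wedgeDet` for an adapted pair. -/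
def rowPerm (d a b : ℕ) (hab : a + b + 1 = d) : Fin d ≃ Fin d where
  toFun i := ⟨if (i : ℕ) < a then (i : ℕ)
      else if (i : ℕ) < a + b then d - 1 - ((i : ℕ) - a) else a, by
    have := i.isLt; split_ifs <;> omega⟩
  invFun i := ⟨if (i : ℕ) < a then (i : ℕ)
      else if (i : ℕ) < a + b then d - 1 - ((i : ℕ) - a) else a, by
    have := i.isLt; split_ifs <;> omega⟩
  left_inv i := by
    apply Fin.ext
    simp only
    have := i.isLt
    split_ifs <;> omega
  right_inv i := by
    apply Fin.ext
    simp only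
    have := i.isLt
    split_ifs <;> omega

lemma rowPerm_val (d a b : ℕ) (hab : a + b + 1 = d) (i : Fin d) :
    ((rowPerm d a b hab i : Fin d) : ℕ) = (if (i : ℕ) < a then (i : ℕ)
      else if (i : ℕ) < a + b then d - 1 - ((i : ℕ) - a) else a) := rfl

/-- Evaluation of the wedge determinant built from an adapted pair. -/
lemma wedge_pair {f : ℕ → Fin d → ℂ}
    {B : Basis (Fin d) ℂ (Fin d → ℂ)} (hB : ∀ j : Fin d, B j = f (j : ℕ))
    {a b : ℕ} (hab : a + b + 1 = d) :
    ∃ E : ℂ, E ≠ 0 ∧ ∀ h : Fin d → ℂ,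
      wedgeDet d a b f (fun k => f (d - 1 - k)) (fun _ => h) =
        B.repr h ⟨a, by omega⟩ * E := by
  have hd : 0 < d := by omega
  set L : Fin d := ⟨d - 1, by omega⟩ with hL
  set e : Fin d ≃ Fin d := rowPerm d a b hab with he
  set M0 : Matrix (Fin d) (Fin d) ℂ := Matrix.of fun (i j : Fin d) =>
    if (i : ℕ) < a then f (i : ℕ) j
    else if (i : ℕ) < a + b then (fun k => f (d - 1 - k)) ((i : ℕ) - a) j
    else (fun _ : ℕ => f a) ((i : ℕ) - a - b) j with hM0
  have hrow : ∀ i : Fin d, M0 i = B (e i) := by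
    intro i
    rw [hB (e i)]
    have heval := rowPerm_val d a b hab i
    rw [← he] at heval
    funext j
    simp only [hM0, Matrix.of_apply, heval]
    split_ifs <;> rfl
  have hE0 : M0.det ≠ 0 := by
    have hli : LinearIndependent ℂ (fun i : Fin d => M0 i) := by
      rw [show (fun i : Fin d => M0 i) = ⇑B ∘ ⇑e from funext fun i => hrow i]
      exact B.linearIndependent.comp e e.injective
    have := Matrix.linearIndependent_rows_iff_isUnit.mp hli
    rw [Matrix.isUnit_iff_isUnit_det] at this
    exact this.ne_zero
  refine ⟨M0.det, hE0, fun h => ?_⟩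
  have hsum : (∑ k : Fin d, B.repr h (e k) • M0 k) = h := by
    rw [show (fun k : Fin d => B.repr h (e k) • M0 k)
        = (fun k : Fin d => (fun t : Fin d => B.repr h t • B t) (e k)) from
      funext fun k => by rw [hrow k]]
    rw [Equiv.sum_comp e (fun t : Fin d => B.repr h t • B t)]
    exact B.sum_repr h
  have hupd : (Matrix.of fun (i j : Fin d) =>
      if (i : ℕ) < a then f (i : ℕ) j
      else if (i : ℕ) < a + b then (fun k => f (d - 1 - k)) ((i : ℕ) - a) j
      else (fun _ : ℕ => h) ((i : ℕ) - a - b) j)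
      = M0.updateRow L (∑ k : Fin d, B.repr h (e k) • M0 k) := by
    rw [hsum]
    ext i j
    rw [Matrix.updateRow_apply]
    by_cases hi : i = L
    · rw [if_pos hi, hi]
      simp only [Matrix.of_apply, hL]
      rw [if_neg (by simp; omega), if_neg (by simp; omega)]
    · have hiv : (i : ℕ) < a + b := by
        have hne : (i : ℕ) ≠ d - 1 := fun hc => hi (Fin.ext (by simp [hL, hc]))
        have := i.isLt
        omega
      rw [if_neg hi]
      simp only [hM0, Matrix.of_apply]
      by_cases hia : (i : ℕ) < a
      · rw [if_pos hia, if_pos hia]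
      · rw [if_neg hia, if_neg hia, if_pos hiv, if_pos hiv]
  show (Matrix.of fun (i j : Fin d) =>
      if (i : ℕ) < a then f (i : ℕ) j
      else if (i : ℕ) < a + b then (fun k => f (d - 1 - k)) ((i : ℕ) - a) j
      else (fun _ : ℕ => h) ((i : ℕ) - a - b) j).det = _
  rw [hupd, Matrix.det_updateRow_sum]
  have heL : e L = ⟨a, by omega⟩ := by
    apply Fin.ext
    have h1 := rowPerm_val d a b hab L
    rw [← he] at h1
    rw [h1]
    have h2 : (L : ℕ) = d - 1 := rfl
    rw [h2, if_neg (by omega), if_neg (by omega)]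
  rw [heL]
  rw [smul_eq_mul]
lemma mem_G2_of_adapted_rev {G2 : ℕ → Submodule ℂ (Fin d → ℂ)} {f : ℕ → Fin d → ℂ}
    (hf2 : IsAdaptedBasis d G2 (fun k => f (d - 1 - k))) {t : ℕ} (ht : t < d)
    {k : ℕ} (hkd : k ≤ d) (hk : d - t ≤ k) : f t ∈ G2 k := by
  rw [hf2 k hkd]
  refine Submodule.subset_span ⟨d - 1 - t, by simp only [Set.mem_setOf_eq]; omega, ?_⟩
  simp only
  rw [show d - 1 - (d - 1 - t) = t by omega]

lemma repr_ne_zero_of_genpos {G1 G2 H : ℕ → Submodule ℂ (Fin d → ℂ)}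
    (hG1 : IsCompleteFlag d G1) (hG2 : IsCompleteFlag d G2) (hH : IsCompleteFlag d H)
    (hgen : GenPos3 d G1 G2 H) {f : ℕ → Fin d → ℂ}
    (hf1 : IsAdaptedBasis d G1 f) (hf2 : IsAdaptedBasis d G2 (fun k => f (d - 1 - k)))
    {B : Basis (Fin d) ℂ (Fin d → ℂ)} (hB : ∀ j : Fin d, B j = f (j : ℕ))
    {h : Fin d → ℂ} (hh : h ∈ H 1) (h0 : h ≠ 0) (hd : 0 < d) :
    ∀ j : Fin d, B.repr h j ≠ 0 := by
  intro j hrj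
  set k : ℕ := (j : ℕ) with hk
  have hkd : k < d := j.isLt
  -- h lies in the span of the basis vectors other than j
  have hmem : h ∈ Submodule.span ℂ (⇑B '' {t : Fin d | t ≠ j}) := by
    rw [B.mem_span_image]
    intro t ht
    rw [Finset.mem_coe, Finsupp.mem_support_iff] at ht
    simp only [Set.mem_setOf_eq]
    intro hteq
    rw [hteq] at ht
    exact ht hrj
  -- that span is inside G1 k ⊔ G2 (d - 1 - k)
  have hle : Submodule.span ℂ (⇑B '' {t : Fin d | t ≠ j}) ≤ G1 k ⊔ G2 (d - 1 - k) := by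
    rw [Submodule.span_le]
    rintro y ⟨t, htj, rfl⟩
    simp only [Set.mem_setOf_eq] at htj
    rw [hB t]
    rcases Nat.lt_or_ge (t : ℕ) k with hlt | hge
    · apply Submodule.mem_sup_left
      have : f (t : ℕ) ∈ G1 ((t : ℕ) + 1) := by
        rw [hf1 ((t : ℕ) + 1) (by omega)]
        exact Submodule.subset_span ⟨(t : ℕ), by simp only [Set.mem_setOf_eq]; omega, rfl⟩
      exact hG1.1 (by omega : (t : ℕ) + 1 ≤ k) this
    · have hgt : k < (t : ℕ) := by
        rcases Nat.lt_or_ge k (t : ℕ) with h' | h'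
        · exact h'
        · exfalso; exact htj (Fin.ext (by omega))
      apply Submodule.mem_sup_right
      exact mem_G2_of_adapted_rev hf2 t.isLt (by omega) (by omega)
  have hHle : H 1 ≤ G1 k ⊔ G2 (d - 1 - k) := by
    rw [line_eq_span (flag_finrank hH (by omega)) hh h0, Submodule.span_le,
      Set.singleton_subset_iff]
    exact hle hmem
  have htop : G1 k ⊔ G2 (d - 1 - k) = ⊤ := by
    have := hgen k (d - 1 - k) 1 (by omega)
    rw [eq_top_iff, ← this]
    exact sup_le (le_refl _) hHle
  have hsum := Submodule.finrank_sup_add_finrank_inf_eq (G1 k) (G2 (d - 1 - k))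
  rw [htop, flag_finrank hG1 (by omega), flag_finrank hG2 (by omega),
    finrank_top, Module.finrank_fin_fun] at hsum
  omega

/-- Explicit formula for the double ratio in terms of coordinates w.r.t. an adapted pair. -/
lemma doubleRatio_formula {G1 G2 H1 H2 : ℕ → Submodule ℂ (Fin d → ℂ)}
    (hG1 : IsCompleteFlag d G1) (hG2 : IsCompleteFlag d G2)
    (hH1 : IsCompleteFlag d H1) (hH2 : IsCompleteFlag d H2)
    {f : ℕ → Fin d → ℂ}
    (hf1 : IsAdaptedBasis d G1 f) (hf2 : IsAdaptedBasis d G2 (fun k => f (d - 1 - k)))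
    {B : Basis (Fin d) ℂ (Fin d → ℂ)} (hB : ∀ j : Fin d, B j = f (j : ℕ))
    {h1 h2 : Fin d → ℂ} (hh1 : h1 ∈ H1 1) (h01 : h1 ≠ 0) (hh2 : h2 ∈ H2 1) (h02 : h2 ≠ 0)
    {x1 x2 : ℕ → ℂ} (hx1 : ∀ j : Fin d, x1 (j : ℕ) = B.repr h1 j)
    (hx2 : ∀ j : Fin d, x2 (j : ℕ) = B.repr h2 j)
    {i : ℕ × ℕ} (hi : memA d i) :
    doubleRatio d i G1 G2 H1 H2 =
      -((x1 i.1 * x2 (i.1 - 1)) / (x2 i.1 * x1 (i.1 - 1))) := by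
  obtain ⟨hi1, hi2, hisum⟩ := hi
  have hab1 : i.1 + (i.2 - 1) + 1 = d := by omega
  have hab2 : (i.1 - 1) + i.2 + 1 = d := by omega
  obtain ⟨E1, hE1, hW1⟩ := wedge_pair hB hab1
  obtain ⟨E2, hE2, hW2⟩ := wedge_pair hB hab2
  rw [doubleRatio_eq hG1 hG2 hH1 hH2 hf1 hf2 hh1 h01 hh2 h02 ⟨hi1, hi2, hisum⟩]
  rw [hW1 h1, hW1 h2, hW2 h1, hW2 h2]
  have hv1 : x1 i.1 = B.repr h1 ⟨i.1, by omega⟩ := hx1 ⟨i.1, by omega⟩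
  have hv2 : x2 i.1 = B.repr h2 ⟨i.1, by omega⟩ := hx2 ⟨i.1, by omega⟩
  have hv3 : x1 (i.1 - 1) = B.repr h1 ⟨i.1 - 1, by omega⟩ := hx1 ⟨i.1 - 1, by omega⟩
  have hv4 : x2 (i.1 - 1) = B.repr h2 ⟨i.1 - 1, by omega⟩ := hx2 ⟨i.1 - 1, by omega⟩
  rw [hv1, hv2, hv3, hv4]
  have hK : E1 * E2 ≠ 0 := mul_ne_zero hE1 hE2
  rw [show (B.repr h1 ⟨i.1, by omega⟩ : ℂ) * E1 * ((B.repr h2 ⟨i.1 - 1, by omega⟩ : ℂ) * E2)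
      = (E1 * E2) * ((B.repr h1 ⟨i.1, by omega⟩ : ℂ) * (B.repr h2 ⟨i.1 - 1, by omega⟩ : ℂ)) by ring,
    show (B.repr h2 ⟨i.1, by omega⟩ : ℂ) * E1 * ((B.repr h1 ⟨i.1 - 1, by omega⟩ : ℂ) * E2)
      = (E1 * E2) * ((B.repr h2 ⟨i.1, by omega⟩ : ℂ) * (B.repr h1 ⟨i.1 - 1, by omega⟩ : ℂ)) by ring,
    mul_div_mul_left _ _ hK]
lemma wedge_map (g : Matrix (Fin d) (Fin d) ℂ) {w1 w2 v1 v2 : ℕ → Fin d → ℂ}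
    {h gh : Fin d → ℂ}
    (hv1 : ∀ k, v1 k = g.mulVec (w1 k)) (hv2 : ∀ k, v2 k = g.mulVec (w2 k))
    (hgh : gh = g.mulVec h) (a b : ℕ) :
    wedgeDet d a b v1 v2 (fun _ => gh) = wedgeDet d a b w1 w2 (fun _ => h) * g.det := by
  have hmat : (Matrix.of fun (i j : Fin d) =>
      if (i : ℕ) < a then v1 (i : ℕ) j
      else if (i : ℕ) < a + b then v2 ((i : ℕ) - a) j
      else (fun _ : ℕ => gh) ((i : ℕ) - a - b) j)
      = (Matrix.of fun (i j : Fin d) =>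
      if (i : ℕ) < a then w1 (i : ℕ) j
      else if (i : ℕ) < a + b then w2 ((i : ℕ) - a) j
      else (fun _ : ℕ => h) ((i : ℕ) - a - b) j) * g.transpose := by
    ext i j
    rw [Matrix.mul_apply]
    simp only [Matrix.of_apply, Matrix.transpose_apply]
    by_cases hia : (i : ℕ) < a
    · rw [if_pos hia, hv1]
      rw [Finset.sum_congr rfl fun k (_ : k ∈ Finset.univ) => by rw [if_pos hia]]
      simp [Matrix.mulVec, dotProduct, mul_comm]
    · rw [if_neg hia]
      by_cases hib : (i : ℕ) < a + b
      · rw [if_pos hib, hv2]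
        rw [Finset.sum_congr rfl fun k (_ : k ∈ Finset.univ) => by rw [if_neg hia, if_pos hib]]
        simp [Matrix.mulVec, dotProduct, mul_comm]
      · rw [if_neg hib, hgh]
        rw [Finset.sum_congr rfl fun k (_ : k ∈ Finset.univ) => by rw [if_neg hia, if_neg hib]]
        simp [Matrix.mulVec, dotProduct, mul_comm]
  show (Matrix.of fun (i j : Fin d) =>
      if (i : ℕ) < a then v1 (i : ℕ) j
      else if (i : ℕ) < a + b then v2 ((i : ℕ) - a) j
      else (fun _ : ℕ => gh) ((i : ℕ) - a - b) j).det = _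
  rw [hmat, Matrix.det_mul, Matrix.det_transpose]
  rfl

lemma adapted_map {g : Matrix (Fin d) (Fin d) ℂ} {F F' : ℕ → Submodule ℂ (Fin d → ℂ)}
    (hmap : ∀ k, Submodule.map g.mulVecLin (F k) = F' k)
    {v : ℕ → Fin d → ℂ} (hv : IsAdaptedBasis d F v) :
    IsAdaptedBasis d F' (fun k => g.mulVec (v k)) := by
  intro k hk
  rw [← hmap k, hv k hk, Submodule.map_span, ← Set.image_comp]
  congr 1

lemma exists_unit_matrix (φ ψ : (Fin d → ℂ) →ₗ[ℂ] (Fin d → ℂ))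
    (h1 : φ ∘ₗ ψ = LinearMap.id) (h2 : ψ ∘ₗ φ = LinearMap.id) :
    ∃ g : Matrix (Fin d) (Fin d) ℂ, IsUnit g ∧ g.mulVecLin = φ := by
  refine ⟨LinearMap.toMatrix' φ, ?_, ?_⟩
  · refine isUnit_iff_exists.mpr ⟨LinearMap.toMatrix' ψ, ?_, ?_⟩
    · rw [← LinearMap.toMatrix'_comp, h1, LinearMap.toMatrix'_id]
    · rw [← LinearMap.toMatrix'_comp, h2, LinearMap.toMatrix'_id]
  · rw [← Matrix.toLin'_apply', Matrix.toLin'_toMatrix']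

lemma span_image_smul_eq {w w' : ℕ → Fin d → ℂ} {k : ℕ} (lam : ℕ → ℂ)
    (hlam : ∀ m, m < k → lam m ≠ 0) (hw : ∀ m, m < k → w m = lam m • w' m) :
    Submodule.span ℂ (w '' {m | m < k}) = Submodule.span ℂ (w' '' {m | m < k}) := by
  apply le_antisymm
  · rw [Submodule.span_le]
    rintro y ⟨m, hm, rfl⟩
    simp only [Set.mem_setOf_eq] at hm
    rw [hw m hm]
    exact Submodule.smul_mem _ _ (Submodule.subset_span ⟨m, hm, rfl⟩)
  · rw [Submodule.span_le]
    rintro y ⟨m, hm, rfl⟩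
    simp only [Set.mem_setOf_eq] at hm
    have : w' m = (lam m)⁻¹ • w m := by
      rw [hw m hm, smul_smul, inv_mul_cancel₀ (hlam m hm), one_smul]
    rw [this]
    exact Submodule.smul_mem _ _ (Submodule.subset_span ⟨m, hm, rfl⟩)

lemma mulVec_ne_zero {g : Matrix (Fin d) (Fin d) ℂ} (hg : IsUnit g)
    {h : Fin d → ℂ} (h0 : h ≠ 0) : g.mulVec h ≠ 0 := by
  obtain ⟨g', hgg', hg'g⟩ := isUnit_iff_exists.mp hg
  intro hc
  apply h0
  have : g'.mulVec (g.mulVec h) = h := by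
    rw [Matrix.mulVec_mulVec, hg'g, Matrix.one_mulVec]
  rw [← this, hc, Matrix.mulVec_zero]
lemma div_ratio_scale (A B C D gd : ℂ) (hgd : gd ≠ 0) :
    -((A * gd) * (B * gd) / ((C * gd) * (D * gd))) = -(A * B / (C * D)) := by
  rw [show (A * gd) * (B * gd) = (gd * gd) * (A * B) by ring,
    show (C * gd) * (D * gd) = (gd * gd) * (C * D) by ring,
    mul_div_mul_left _ _ (mul_ne_zero hgd hgd)]

end StatementSix

open StatementSix

theorem statement_6 (d : ℕ) (hd : 2 ≤ d)
    (G1 G2 H1 H2 G1' G2' H1' H2' : ℕ → Submodule ℂ (Fin d → ℂ))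
    (hG1 : IsCompleteFlag d G1) (hG2 : IsCompleteFlag d G2)
    (hH1 : IsCompleteFlag d H1) (hH2 : IsCompleteFlag d H2)
    (hG1' : IsCompleteFlag d G1') (hG2' : IsCompleteFlag d G2')
    (hH1' : IsCompleteFlag d H1') (hH2' : IsCompleteFlag d H2')
    (hgen1 : GenPos3 d G1 G2 H1) (hgen2 : GenPos3 d G1 G2 H2)
    (hgen1' : GenPos3 d G1' G2' H1') (hgen2' : GenPos3 d G1' G2' H2') :
    (∃ g : Matrix (Fin d) (Fin d) ℂ, IsUnit g ∧
        flagMap d g G1 = G1' ∧ flagMap d g G2 = G2' ∧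
        Submodule.map g.mulVecLin (H1 1) = H1' 1 ∧
        Submodule.map g.mulVecLin (H2 1) = H2' 1) ↔
      ∀ i : ℕ × ℕ, memA d i →
        doubleRatio d i G1 G2 H1 H2 = doubleRatio d i G1' G2' H1' H2' := by
  have hd0 : 0 < d := by omega
  have hr1 : Module.finrank ℂ ↥(H1 1) = 1 := flag_finrank hH1 (by omega)
  have hr2 : Module.finrank ℂ ↥(H2 1) = 1 := flag_finrank hH2 (by omega)
  have hr1' : Module.finrank ℂ ↥(H1' 1) = 1 := flag_finrank hH1' (by omega)
  have hr2' : Module.finrank ℂ ↥(H2' 1) = 1 := flag_finrank hH2' (by omega)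
  obtain ⟨hm1, hne1⟩ := lineVec_spec hr1
  obtain ⟨hm2, hne2⟩ := lineVec_spec hr2
  obtain ⟨hm1', hne1'⟩ := lineVec_spec hr1'
  obtain ⟨hm2', hne2'⟩ := lineVec_spec hr2'
  set h1 : Fin d → ℂ := lineVec d (H1 1) with hh1def
  set h2 : Fin d → ℂ := lineVec d (H2 1) with hh2def
  set h1' : Fin d → ℂ := lineVec d (H1' 1) with hh1'def
  set h2' : Fin d → ℂ := lineVec d (H2' 1) with hh2'def
  have htr := genpos_transverse hH1 hgen1
  have htr' := genpos_transverse hH1' hgen1'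
  obtain ⟨f, hf1, hf2, -⟩ := exists_adapted_pair hG1 hG2 htr
  obtain ⟨f', hf1', hf2', -⟩ := exists_adapted_pair hG1' hG2' htr'
  obtain ⟨B, hB⟩ := exists_basis_of_adapted hG1 hf1
  obtain ⟨B', hB'⟩ := exists_basis_of_adapted hG1' hf1'
  constructor
  · rintro ⟨g, hgu, hgG1, hgG2, hgH1, hgH2⟩ i hi
    have hmap1 : ∀ k, Submodule.map g.mulVecLin (G1 k) = G1' k := fun k => congrFun hgG1 k
    have hmap2 : ∀ k, Submodule.map g.mulVecLin (G2 k) = G2' k := fun k => congrFun hgG2 k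
    have hu1 : IsAdaptedBasis d G1' (fun k => g.mulVec (f k)) := adapted_map hmap1 hf1
    have hu2 : IsAdaptedBasis d G2' (fun k => g.mulVec (f (d - 1 - k))) := adapted_map hmap2 hf2
    have hgh1 : g.mulVec h1 ∈ H1' 1 := by
      rw [← hgH1]
      exact Submodule.mem_map.mpr ⟨h1, hm1, Matrix.mulVecLin_apply ..⟩
    have hgh2 : g.mulVec h2 ∈ H2' 1 := by
      rw [← hgH2]
      exact Submodule.mem_map.mpr ⟨h2, hm2, Matrix.mulVecLin_apply ..⟩
    have hgne1 : g.mulVec h1 ≠ 0 := mulVec_ne_zero hgu hne1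
    have hgne2 : g.mulVec h2 ≠ 0 := mulVec_ne_zero hgu hne2
    rw [doubleRatio_eq hG1 hG2 hH1 hH2 hf1 hf2 hm1 hne1 hm2 hne2 hi,
      doubleRatio_eq hG1' hG2' hH1' hH2' hu1 hu2 hgh1 hgne1 hgh2 hgne2 hi]
    have hW : ∀ a b : ℕ, ∀ h : Fin d → ℂ,
        wedgeDet d a b (fun k => g.mulVec (f k)) (fun k => g.mulVec (f (d - 1 - k)))
          (fun _ => g.mulVec h)
        = wedgeDet d a b f (fun k => f (d - 1 - k)) (fun _ => h) * g.det :=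
      fun a b h => wedge_map g (fun _ => rfl) (fun _ => rfl) rfl a b
    rw [hW, hW, hW, hW]
    have hgd : g.det ≠ 0 := ((Matrix.isUnit_iff_isUnit_det g).mp hgu).ne_zero
    exact (div_ratio_scale _ _ _ _ _ hgd).symm
  · intro hD
    set x1 : ℕ → ℂ := fun k => if hk : k < d then B.repr h1 ⟨k, hk⟩ else 1 with hx1def
    set x2 : ℕ → ℂ := fun k => if hk : k < d then B.repr h2 ⟨k, hk⟩ else 1 with hx2def
    set x1' : ℕ → ℂ := fun k => if hk : k < d then B'.repr h1' ⟨k, hk⟩ else 1 with hx1'def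
    set x2' : ℕ → ℂ := fun k => if hk : k < d then B'.repr h2' ⟨k, hk⟩ else 1 with hx2'def
    have hx1 : ∀ j : Fin d, x1 (j : ℕ) = B.repr h1 j := fun j => by
      simp [hx1def, j.isLt]
    have hx2 : ∀ j : Fin d, x2 (j : ℕ) = B.repr h2 j := fun j => by
      simp [hx2def, j.isLt]
    have hx1' : ∀ j : Fin d, x1' (j : ℕ) = B'.repr h1' j := fun j => by
      simp [hx1'def, j.isLt]
    have hx2' : ∀ j : Fin d, x2' (j : ℕ) = B'.repr h2' j := fun j => by
      simp [hx2'def, j.isLt]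
    have hx1ne : ∀ k, x1 k ≠ 0 := by
      intro k
      by_cases hk : k < d
      · rw [show k = ((⟨k, hk⟩ : Fin d) : ℕ) from rfl, hx1 ⟨k, hk⟩]
        exact repr_ne_zero_of_genpos hG1 hG2 hH1 hgen1 hf1 hf2 hB hm1 hne1 hd0 ⟨k, hk⟩
      · simp [hx1def, hk]
    have hx2ne : ∀ k, x2 k ≠ 0 := by
      intro k
      by_cases hk : k < d
      · rw [show k = ((⟨k, hk⟩ : Fin d) : ℕ) from rfl, hx2 ⟨k, hk⟩]
        exact repr_ne_zero_of_genpos hG1 hG2 hH2 hgen2 hf1 hf2 hB hm2 hne2 hd0 ⟨k, hk⟩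
      · simp [hx2def, hk]
    have hx1'ne : ∀ k, x1' k ≠ 0 := by
      intro k
      by_cases hk : k < d
      · rw [show k = ((⟨k, hk⟩ : Fin d) : ℕ) from rfl, hx1' ⟨k, hk⟩]
        exact repr_ne_zero_of_genpos hG1' hG2' hH1' hgen1' hf1' hf2' hB' hm1' hne1' hd0 ⟨k, hk⟩
      · simp [hx1'def, hk]
    have hx2'ne : ∀ k, x2' k ≠ 0 := by
      intro k
      by_cases hk : k < d
      · rw [show k = ((⟨k, hk⟩ : Fin d) : ℕ) from rfl, hx2' ⟨k, hk⟩]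
        exact repr_ne_zero_of_genpos hG1' hG2' hH2' hgen2' hf1' hf2' hB' hm2' hne2' hd0 ⟨k, hk⟩
      · simp [hx2'def, hk]
    have cross : ∀ k, k + 1 < d →
        x1 (k + 1) * x2 k * (x2' (k + 1) * x1' k)
          = x1' (k + 1) * x2' k * (x2 (k + 1) * x1 k) := by
      intro k hk
      have hmem : memA d (k + 1, d - (k + 1)) := ⟨by omega, by omega, by omega⟩
      have h1eq := doubleRatio_formula hG1 hG2 hH1 hH2 hf1 hf2 hB hm1 hne1 hm2 hne2
        hx1 hx2 hmem
      have h2eq := doubleRatio_formula hG1' hG2' hH1' hH2' hf1' hf2' hB' hm1' hne1' hm2' hne2'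
        hx1' hx2' hmem
      have heq := hD (k + 1, d - (k + 1)) hmem
      rw [h1eq, h2eq] at heq
      have heq2 := neg_inj.mp heq
      simp only [Nat.add_sub_cancel] at heq2
      exact (div_eq_div_iff (mul_ne_zero (hx2ne _) (hx1ne _))
        (mul_ne_zero (hx2'ne _) (hx1'ne _))).mp heq2
    set c : ℂ := (x1' 0 * x2 0) / (x1 0 * x2' 0) with hc
    have hcne : c ≠ 0 := div_ne_zero (mul_ne_zero (hx1'ne 0) (hx2ne 0))
      (mul_ne_zero (hx1ne 0) (hx2'ne 0))
    have key : ∀ k, k < d → x1' k * x2 k = c * (x1 k * x2' k) := by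
      intro k
      induction k with
      | zero =>
        intro _
        rw [hc, div_mul_cancel₀ _ (mul_ne_zero (hx1ne 0) (hx2'ne 0))]
      | succ n ih =>
        intro hk
        have ihh := ih (by omega)
        have hcr := cross n hk
        apply mul_left_cancel₀ (mul_ne_zero (hx2'ne n) (hx1ne n))
        calc (x2' n * x1 n) * (x1' (n + 1) * x2 (n + 1))
            = x1' (n + 1) * x2' n * (x2 (n + 1) * x1 n) := by ring
          _ = x1 (n + 1) * x2 n * (x2' (n + 1) * x1' n) := hcr.symm
          _ = (x2' (n + 1) * x1 (n + 1)) * (x1' n * x2 n) := by ring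
          _ = (x2' (n + 1) * x1 (n + 1)) * (c * (x1 n * x2' n)) := by rw [ihh]
          _ = (x2' n * x1 n) * (c * (x1 (n + 1) * x2' (n + 1))) := by ring
    set lam : Fin d → ℂ := fun j => x1' (j : ℕ) / x1 (j : ℕ) with hlam
    have hlamne : ∀ j : Fin d, lam j ≠ 0 := fun j => div_ne_zero (hx1'ne _) (hx1ne _)
    set φ : (Fin d → ℂ) →ₗ[ℂ] (Fin d → ℂ) := B.constr ℂ (fun j => lam j • B' j) with hφ
    set ψ : (Fin d → ℂ) →ₗ[ℂ] (Fin d → ℂ) := B'.constr ℂ (fun j => (lam j)⁻¹ • B j) with hψ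
    have hφψ : φ ∘ₗ ψ = LinearMap.id := by
      apply B'.ext
      intro j
      rw [LinearMap.comp_apply, hψ, Module.Basis.constr_basis, map_smul, hφ, Module.Basis.constr_basis,
        smul_smul, inv_mul_cancel₀ (hlamne j), one_smul, LinearMap.id_apply]
    have hψφ : ψ ∘ₗ φ = LinearMap.id := by
      apply B.ext
      intro j
      rw [LinearMap.comp_apply, hφ, Module.Basis.constr_basis, map_smul, hψ, Module.Basis.constr_basis,
        smul_smul, mul_inv_cancel₀ (hlamne j), one_smul, LinearMap.id_apply]
    obtain ⟨g, hgu, hgφ⟩ := exists_unit_matrix φ ψ hφψ hψφ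
    have hsurj : Function.Surjective φ := fun y => ⟨ψ y, by
      rw [← LinearMap.comp_apply, hφψ]; rfl⟩
    have hφf : ∀ m, m < d → φ (f m) = (x1' m / x1 m) • f' m := by
      intro m hm
      rw [← hB ⟨m, hm⟩, hφ, Module.Basis.constr_basis, hB' ⟨m, hm⟩]
    have hflag1 : flagMap d g G1 = G1' := by
      funext k
      show Submodule.map g.mulVecLin (G1 k) = G1' k
      rw [hgφ]
      by_cases hk : k ≤ d
      · rw [hf1 k hk, hf1' k hk, Submodule.map_span, ← Set.image_comp]
        refine span_image_smul_eq (fun m => x1' m / x1 m)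
          (fun m _ => div_ne_zero (hx1'ne m) (hx1ne m)) (fun m hm => ?_)
        exact hφf m (by omega)
      · push_neg at hk
        rw [flag_top hG1 (by omega), flag_top hG1' (by omega), Submodule.map_top,
          LinearMap.range_eq_top.mpr hsurj]
    have hflag2 : flagMap d g G2 = G2' := by
      funext k
      show Submodule.map g.mulVecLin (G2 k) = G2' k
      rw [hgφ]
      by_cases hk : k ≤ d
      · rw [hf2 k hk, hf2' k hk, Submodule.map_span, ← Set.image_comp]
        refine span_image_smul_eq (fun m => x1' (d - 1 - m) / x1 (d - 1 - m))
          (fun m _ => div_ne_zero (hx1'ne _) (hx1ne _)) (fun m hm => ?_)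
        exact hφf (d - 1 - m) (by omega)
      · push_neg at hk
        rw [flag_top hG2 (by omega), flag_top hG2' (by omega), Submodule.map_top,
          LinearMap.range_eq_top.mpr hsurj]
    have hφh1 : φ h1 = h1' := by
      conv_lhs => rw [← B.sum_repr h1]
      rw [map_sum]
      conv_rhs => rw [← B'.sum_repr h1']
      refine Finset.sum_congr rfl fun j _ => ?_
      rw [map_smul, hφ, Module.Basis.constr_basis, smul_smul]
      congr 1
      rw [← hx1 j, ← hx1' j, hlam]
      show x1 (j : ℕ) * (x1' (j : ℕ) / x1 (j : ℕ)) = x1' (j : ℕ)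
      rw [mul_comm, div_mul_cancel₀ _ (hx1ne _)]
    have hφh2 : φ h2 = c • h2' := by
      conv_lhs => rw [← B.sum_repr h2]
      rw [map_sum]
      conv_rhs => rw [← B'.sum_repr h2']
      rw [Finset.smul_sum]
      refine Finset.sum_congr rfl fun j _ => ?_
      rw [map_smul, hφ, Module.Basis.constr_basis, smul_smul, smul_smul]
      congr 1
      rw [← hx2 j, ← hx2' j, hlam]
      show x2 (j : ℕ) * (x1' (j : ℕ) / x1 (j : ℕ)) = c * x2' (j : ℕ)
      have hkey := key (j : ℕ) j.isLt
      rw [← mul_div_assoc, div_eq_iff (hx1ne _)]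
      linear_combination hkey
    have hline1 : Submodule.map g.mulVecLin (H1 1) = H1' 1 := by
      rw [hgφ, line_eq_span hr1 hm1 hne1, line_eq_span hr1' hm1' hne1',
        Submodule.map_span, Set.image_singleton, hφh1]
    have hline2 : Submodule.map g.mulVecLin (H2 1) = H2' 1 := by
      rw [hgφ, line_eq_span hr2 hm2 hne2, Submodule.map_span, Set.image_singleton, hφh2,
        Submodule.span_singleton_smul_eq (isUnit_iff_ne_zero.mpr hcne) _,
        ← line_eq_span hr2' hm2' hne2']
    exact ⟨g, hgu, hflag1, hflag2, hline1, hline2⟩
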